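/- For bounded linear operators A on H and B on K, (1/4)‖ |A|² ⊗ |B|² + |A*|² ⊗ |B*|² ‖ + (1/2)‖ Re(|A||A*| ⊗ |B||B*|) ‖ ≤ (1/4)(‖A‖‖B‖ + ‖A²‖^{1/2}‖B²‖^{1/2})² ≤ ‖A‖²‖B‖². -/

import Mathlib

open ContinuousLinearMap

/-- Numerical radius: `w(T) = sup { |⟨Tx,x⟩| : ‖x‖ = 1 }`. -/
noncomputable def nrad {E : Type*} [NormedAddCommGroup E] [InnerProductSpace ℂ E]
    (T : E →L[ℂ] E) : ℝ :=
  ⨆ x : {x : E // ‖x‖ = 1}, ‖(inner ℂ (T x.1) x.1 : ℂ)‖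

/-- `tmul` realizes `E` as the Hilbert tensor product of `H` and `K`:
the inner product is multiplicative on elementary tensors and elementary
tensors span a dense subspace. -/
structure IsHilbertTensorMap
    {H K E : Type*} [NormedAddCommGroup H] [InnerProductSpace ℂ H]
    [NormedAddCommGroup K] [InnerProductSpace ℂ K]
    [NormedAddCommGroup E] [InnerProductSpace ℂ E]
    (tmul : H →ₗ[ℂ] K →ₗ[ℂ] E) : Prop where
  inner_tmul : ∀ (x z : H) (y w : K),
    (inner ℂ (tmul x y) (tmul z w) : ℂ) = (inner ℂ x z : ℂ) * (inner ℂ y w : ℂ)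
  dense_span :
    Dense ((Submodule.span ℂ (Set.range fun p : H × K => tmul p.1 p.2) : Submodule ℂ E) : Set E)

/-- `T` is the tensor product operator `A ⊗ B`, i.e. `T (x ⊗ y) = A x ⊗ B y`. -/
def IsTensorOp {H K E : Type*} [NormedAddCommGroup H] [InnerProductSpace ℂ H]
    [NormedAddCommGroup K] [InnerProductSpace ℂ K]
    [NormedAddCommGroup E] [InnerProductSpace ℂ E]
    (tmul : H →ₗ[ℂ] K →ₗ[ℂ] E)
    (A : H →L[ℂ] H) (B : K →L[ℂ] K) (T : E →L[ℂ] E) : Prop :=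
  ∀ (x : H) (y : K), T (tmul x y) = tmul (A x) (B y)

/-- Real part of an operator: `Re(T) = (T + T*)/2`. -/
noncomputable def reOp {E : Type*} [NormedAddCommGroup E] [InnerProductSpace ℂ E]
    [CompleteSpace E] (T : E →L[ℂ] E) : E →L[ℂ] E :=
  (2 : ℂ)⁻¹ • (T + ContinuousLinearMap.adjoint T)

/-- Imaginary part of an operator: `Im(T) = (T - T*)/(2i)`. -/
noncomputable def imOp {E : Type*} [NormedAddCommGroup E] [InnerProductSpace ℂ E]
    [CompleteSpace E] (T : E →L[ℂ] E) : E →L[ℂ] E :=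
  (2 * Complex.I)⁻¹ • (T - ContinuousLinearMap.adjoint T)

/-- The modulus `|A| = (A*A)^{1/2}`. -/
noncomputable def absOp {H : Type*} [NormedAddCommGroup H] [InnerProductSpace ℂ H]
    [CompleteSpace H] (A : H →L[ℂ] H) : H →L[ℂ] H :=
  CFC.sqrt (ContinuousLinearMap.adjoint A * A)

/-! ### Auxiliary lemmas -/

set_option synthInstance.maxHeartbeats 1000000
set_option maxHeartbeats 1000000
set_option linter.unusedSectionVars false
set_option linter.unusedVariables false

section CStarFacts

variable {H : Type*} [NormedAddCommGroup H] [InnerProductSpace ℂ H] [CompleteSpace H]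

lemma absOp_sa (A : H →L[ℂ] H) : IsSelfAdjoint (absOp A) :=
  IsSelfAdjoint.of_nonneg (CFC.sqrt_nonneg _)

lemma absOp_sq (A : H →L[ℂ] H) : absOp A ^ 2 = star A * A := by
  rw [absOp, ← star_eq_adjoint]
  exact CFC.sq_sqrt _ (star_mul_self_nonneg A)

lemma absOp_adj_sq (A : H →L[ℂ] H) :
    absOp (ContinuousLinearMap.adjoint A) ^ 2 = A * star A := by
  rw [absOp_sq, ← star_eq_adjoint, star_star]

lemma mul_self_eq_of_norm (x y : ℝ) (hx : 0 ≤ x) (hy : 0 ≤ y) (h : x * x = y * y) : x = y := by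
  nlinarith

lemma norm_absOp (A : H →L[ℂ] H) : ‖absOp A‖ = ‖A‖ := by
  have h1 : ‖absOp A‖ * ‖absOp A‖ = ‖A‖ * ‖A‖ := by
    have h2 := CStarRing.norm_star_mul_self (x := absOp A)
    have h3 : star (absOp A) = absOp A := absOp_sa A
    rw [h3, ← sq, absOp_sq, CStarRing.norm_star_mul_self] at h2
    linarith
  exact mul_self_eq_of_norm _ _ (norm_nonneg _) (norm_nonneg _) h1

lemma norm_absOp_adj (A : H →L[ℂ] H) : ‖absOp (ContinuousLinearMap.adjoint A)‖ = ‖A‖ := by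
  rw [norm_absOp]
  exact LinearIsometryEquiv.norm_map ContinuousLinearMap.adjoint A

lemma norm_absOp_sq (A : H →L[ℂ] H) : ‖absOp A ^ 2‖ = ‖A‖ ^ 2 := by
  rw [absOp_sq, CStarRing.norm_star_mul_self, sq]

lemma norm_absOp_adj_sq (A : H →L[ℂ] H) :
    ‖absOp (ContinuousLinearMap.adjoint A) ^ 2‖ = ‖A‖ ^ 2 := by
  rw [absOp_adj_sq, CStarRing.norm_self_mul_star, sq]

lemma norm_absOp_mul_absOp_adj (A : H →L[ℂ] H) :
    ‖absOp A * absOp (ContinuousLinearMap.adjoint A)‖ = ‖A ^ 2‖ := by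
  set P := absOp A with hP
  set Q := absOp (ContinuousLinearMap.adjoint A) with hQ
  have hPs : star P = P := absOp_sa A
  have hQs : star Q = Q := absOp_sa _
  have h1 : ‖P * Q‖ = ‖A * Q‖ := by
    apply mul_self_eq_of_norm _ _ (norm_nonneg _) (norm_nonneg _)
    rw [← CStarRing.norm_star_mul_self (x := P * Q), ← CStarRing.norm_star_mul_self (x := A * Q)]
    congr 1
    rw [star_mul, hPs, hQs, star_mul, hQs]
    calc Q * P * (P * Q) = Q * (P ^ 2) * Q := by noncomm_ring
      _ = Q * star A * (A * Q) := by rw [absOp_sq]; noncomm_ring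
  have h2 : ‖A * Q‖ = ‖A ^ 2‖ := by
    apply mul_self_eq_of_norm _ _ (norm_nonneg _) (norm_nonneg _)
    rw [← CStarRing.norm_self_mul_star (x := A * Q), ← CStarRing.norm_self_mul_star (x := A ^ 2)]
    congr 1
    rw [star_mul, hQs]
    calc A * Q * (Q * star A) = A * (Q ^ 2) * star A := by noncomm_ring
      _ = A ^ 2 * star (A ^ 2) := by rw [absOp_adj_sq, star_pow]; noncomm_ring
  rw [h1, h2]

lemma norm_absOp_sq_mul_absOp_adj_sq (A : H →L[ℂ] H) :
    ‖absOp A ^ 2 * absOp (ContinuousLinearMap.adjoint A) ^ 2‖ ≤ ‖A‖ ^ 2 * ‖A ^ 2‖ := by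
  set P := absOp A with hP
  set Q := absOp (ContinuousLinearMap.adjoint A) with hQ
  have hfac : P ^ 2 * Q ^ 2 = P * (P * Q) * Q := by noncomm_ring
  rw [hfac]
  calc ‖P * (P * Q) * Q‖ ≤ ‖P * (P * Q)‖ * ‖Q‖ := norm_mul_le _ _
    _ ≤ ‖P‖ * ‖P * Q‖ * ‖Q‖ := by
        have := norm_mul_le P (P * Q)
        have hq : (0:ℝ) ≤ ‖Q‖ := norm_nonneg _
        nlinarith
    _ = ‖A‖ ^ 2 * ‖A ^ 2‖ := by
        rw [norm_absOp_mul_absOp_adj, norm_absOp, norm_absOp_adj]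
        ring
end CStarFacts

section OrderFacts

variable {E : Type*} [NormedAddCommGroup E] [InnerProductSpace ℂ E] [CompleteSpace E]

lemma real_smul_op_eq (m : ℝ) (T : E →L[ℂ] E) : m • T = (m : ℂ) • T := by
  rw [show ((m:ℂ)) = m • (1:ℂ) by simp [Complex.real_smul], smul_assoc, one_smul]

lemma algebraMap_nonneg_op {r : ℝ} (hr : 0 ≤ r) : (0 : E →L[ℂ] E) ≤ algebraMap ℝ _ r := by
  have h := star_mul_self_nonneg (algebraMap ℝ (E →L[ℂ] E) (Real.sqrt r))
  have hsa : star (algebraMap ℝ (E →L[ℂ] E) (Real.sqrt r))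
      = algebraMap ℝ (E →L[ℂ] E) (Real.sqrt r) := by
    rw [Algebra.algebraMap_eq_smul_one, real_smul_op_eq, star_smul, star_one, Complex.star_def,
      Complex.conj_ofReal]
  rw [hsa, ← map_mul, Real.mul_self_sqrt hr] at h
  exact h

lemma mul_self_le_smul {T : E →L[ℂ] E} (hT : (0:E →L[ℂ] E) ≤ T) {m : ℝ} (hm : ‖T‖ ≤ m) :
    T * T ≤ m • T := by
  set s := CFC.sqrt T with hs
  have hss : s * s = T := by
    have := CFC.sq_sqrt T hT
    rwa [pow_two] at this
  have hsa : star s = s := IsSelfAdjoint.of_nonneg (CFC.sqrt_nonneg _)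
  have h1 : T ≤ algebraMap ℝ _ m := by
    refine le_trans (IsSelfAdjoint.le_algebraMap_norm_self (IsSelfAdjoint.of_nonneg hT)) ?_
    have := algebraMap_nonneg_op (E := E) (sub_nonneg.mpr hm)
    rw [map_sub] at this
    exact sub_nonneg.mp this
  have h2 := star_left_conjugate_le_conjugate h1 s
  rw [hsa] at h2
  calc T * T = s * T * s := by rw [← hss]; noncomm_ring
    _ ≤ s * algebraMap ℝ _ m * s := h2
    _ = m • T := by
        rw [Algebra.algebraMap_eq_smul_one, mul_smul_comm, mul_one, smul_mul_assoc, hss]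

lemma norm_reOp_le (T : E →L[ℂ] E) : ‖reOp T‖ ≤ ‖T‖ := by
  rw [reOp, norm_smul]
  have h1 : ‖(2:ℂ)⁻¹‖ = 1/2 := by simp
  have h2 : ‖T + ContinuousLinearMap.adjoint T‖ ≤ ‖T‖ + ‖T‖ := by
    refine le_trans (norm_add_le _ _) ?_
    rw [LinearIsometryEquiv.norm_map ContinuousLinearMap.adjoint T]
  rw [h1]
  linarith

end OrderFacts

section TensorFacts

variable {H K E : Type*} [NormedAddCommGroup H] [InnerProductSpace ℂ H] [CompleteSpace H]
    [NormedAddCommGroup K] [InnerProductSpace ℂ K] [CompleteSpace K]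
    [NormedAddCommGroup E] [InnerProductSpace ℂ E] [CompleteSpace E]
    (tmul : H →ₗ[ℂ] K →ₗ[ℂ] E)

local notation "⟪" x ", " y "⟫" => (inner ℂ x y : ℂ)

lemma norm_sum_tmul_on_left (htmul : IsHilbertTensorMap tmul) {m : ℕ} {e : Fin m → H}
    (he : Orthonormal ℂ e) (v : Fin m → K) :
    ‖∑ k, tmul (e k) (v k)‖ ^ 2 = ∑ k, ‖v k‖ ^ 2 := by
  have h : (⟪∑ k, tmul (e k) (v k), ∑ k, tmul (e k) (v k)⟫) = ∑ k, (‖v k‖ : ℂ) ^ 2 := by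
    rw [inner_sum]
    have : ∀ l, (⟪∑ k, tmul (e k) (v k), tmul (e l) (v l)⟫) = (‖v l‖ : ℂ) ^ 2 := by
      intro l
      rw [sum_inner]
      have h2 : ∀ k, (⟪tmul (e k) (v k), tmul (e l) (v l)⟫)
          = (if k = l then (1:ℂ) else 0) * ⟪v k, v l⟫ := by
        intro k
        rw [htmul.inner_tmul, orthonormal_iff_ite.mp he]
      simp only [h2, ite_mul, one_mul, zero_mul, Finset.sum_ite_eq', Finset.mem_univ, if_true]
      rw [inner_self_eq_norm_sq_to_K]
      norm_cast
    simp only [this]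
  rw [← inner_self_eq_norm_sq (𝕜 := ℂ), h]
  simp [← Complex.ofReal_pow]

lemma norm_sum_tmul_on_right (htmul : IsHilbertTensorMap tmul) {m : ℕ} {e : Fin m → K}
    (he : Orthonormal ℂ e) (v : Fin m → H) :
    ‖∑ k, tmul (v k) (e k)‖ ^ 2 = ∑ k, ‖v k‖ ^ 2 := by
  have h : (⟪∑ k, tmul (v k) (e k), ∑ k, tmul (v k) (e k)⟫) = ∑ k, (‖v k‖ : ℂ) ^ 2 := by
    rw [inner_sum]
    have : ∀ l, (⟪∑ k, tmul (v k) (e k), tmul (v l) (e l)⟫) = (‖v l‖ : ℂ) ^ 2 := by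
      intro l
      rw [sum_inner]
      have h2 : ∀ k, (⟪tmul (v k) (e k), tmul (v l) (e l)⟫)
          = (if k = l then (1:ℂ) else 0) * ⟪v k, v l⟫ := by
        intro k
        rw [htmul.inner_tmul, orthonormal_iff_ite.mp he, mul_comm]
      simp only [h2, ite_mul, one_mul, zero_mul, Finset.sum_ite_eq', Finset.mem_univ, if_true]
      rw [inner_self_eq_norm_sq_to_K]
      norm_cast
    simp only [this]
  rw [← inner_self_eq_norm_sq (𝕜 := ℂ), h]
  simp [← Complex.ofReal_pow]

lemma le_of_sq_le_sq' {x y : ℝ} (hx : 0 ≤ x) (hy : 0 ≤ y) (h : x ^ 2 ≤ y ^ 2) : x ≤ y := by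
  nlinarith

lemma norm_sum_tmul_map_left (htmul : IsHilbertTensorMap tmul) (S : H →L[ℂ] H)
    {n : ℕ} (x : Fin n → H) (y : Fin n → K) :
    ‖∑ i, tmul (S (x i)) (y i)‖ ≤ ‖S‖ * ‖∑ i, tmul (x i) (y i)‖ := by
  classical
  set G : Submodule ℂ K := Submodule.span ℂ (Set.range y) with hG
  haveI : FiniteDimensional ℂ G := FiniteDimensional.span_of_finite ℂ (Set.finite_range y)
  set m := Module.finrank ℂ G with hm
  let b : OrthonormalBasis (Fin m) ℂ G := stdOrthonormalBasis ℂ G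
  have hy : ∀ i, y i ∈ G := fun i => Submodule.subset_span (Set.mem_range_self i)
  set c : Fin n → Fin m → ℂ := fun i k => b.repr ⟨y i, hy i⟩ k with hc
  set e : Fin m → K := fun k => (b k : K) with he
  have hee : Orthonormal ℂ e := by
    rw [orthonormal_iff_ite]
    intro k l
    rw [he]
    have := orthonormal_iff_ite.mp b.orthonormal k l
    rwa [Submodule.coe_inner] at this
  have hexp : ∀ i, y i = ∑ k, c i k • e k := by
    intro i
    have := congrArg (Subtype.val) (b.sum_repr ⟨y i, hy i⟩)
    simp only [Submodule.coe_sum, SetLike.val_smul] at this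
    exact this.symm
  have key : ∀ (T : H →L[ℂ] H),
      ∑ i, tmul (T (x i)) (y i) = ∑ k, tmul (T (∑ i, c i k • x i)) (e k) := by
    intro T
    calc ∑ i, tmul (T (x i)) (y i)
        = ∑ i, ∑ k, c i k • tmul (T (x i)) (e k) := by
          refine Finset.sum_congr rfl fun i _ => ?_
          rw [hexp i, map_sum]
          simp [map_smul]
      _ = ∑ k, ∑ i, c i k • tmul (T (x i)) (e k) := Finset.sum_comm
      _ = ∑ k, tmul (T (∑ i, c i k • x i)) (e k) := by
          refine Finset.sum_congr rfl fun k _ => ?_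
          rw [map_sum, map_sum]
          simp [map_smul]
  have h1 := key S
  have h2 : ∑ i, tmul (x i) (y i) = ∑ k, tmul (∑ i, c i k • x i) (e k) := by
    simpa using key 1
  rw [h1, h2]
  apply le_of_sq_le_sq' (norm_nonneg _) (by positivity)
  rw [mul_pow, norm_sum_tmul_on_right tmul htmul hee, norm_sum_tmul_on_right tmul htmul hee,
    Finset.mul_sum]
  refine Finset.sum_le_sum fun k _ => ?_
  have := S.le_opNorm (∑ i, c i k • x i)
  nlinarith [norm_nonneg (S (∑ i, c i k • x i)), norm_nonneg (∑ i, c i k • x i), norm_nonneg S]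

lemma norm_sum_tmul_map_right (htmul : IsHilbertTensorMap tmul) (R : K →L[ℂ] K)
    {n : ℕ} (x : Fin n → H) (y : Fin n → K) :
    ‖∑ i, tmul (x i) (R (y i))‖ ≤ ‖R‖ * ‖∑ i, tmul (x i) (y i)‖ := by
  classical
  set G : Submodule ℂ H := Submodule.span ℂ (Set.range x) with hG
  haveI : FiniteDimensional ℂ G := FiniteDimensional.span_of_finite ℂ (Set.finite_range x)
  set m := Module.finrank ℂ G with hm
  let b : OrthonormalBasis (Fin m) ℂ G := stdOrthonormalBasis ℂ G
  have hx : ∀ i, x i ∈ G := fun i => Submodule.subset_span (Set.mem_range_self i)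
  set c : Fin n → Fin m → ℂ := fun i k => b.repr ⟨x i, hx i⟩ k with hc
  set e : Fin m → H := fun k => (b k : H) with he
  have hee : Orthonormal ℂ e := by
    rw [orthonormal_iff_ite]
    intro k l
    rw [he]
    have := orthonormal_iff_ite.mp b.orthonormal k l
    rwa [Submodule.coe_inner] at this
  have hexp : ∀ i, x i = ∑ k, c i k • e k := by
    intro i
    have := congrArg (Subtype.val) (b.sum_repr ⟨x i, hx i⟩)
    simp only [Submodule.coe_sum, SetLike.val_smul] at this
    exact this.symm
  have key : ∀ (T : K →L[ℂ] K),
      ∑ i, tmul (x i) (T (y i)) = ∑ k, tmul (e k) (T (∑ i, c i k • y i)) := by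
    intro T
    calc ∑ i, tmul (x i) (T (y i))
        = ∑ i, ∑ k, c i k • tmul (e k) (T (y i)) := by
          refine Finset.sum_congr rfl fun i _ => ?_
          conv_lhs => rw [hexp i]
          rw [map_sum]
          simp [LinearMap.smul_apply, map_smul]
      _ = ∑ k, ∑ i, c i k • tmul (e k) (T (y i)) := Finset.sum_comm
      _ = ∑ k, tmul (e k) (T (∑ i, c i k • y i)) := by
          refine Finset.sum_congr rfl fun k _ => ?_
          rw [map_sum, map_sum]
          simp [map_smul]
  have h1 := key R
  have h2 : ∑ i, tmul (x i) (y i) = ∑ k, tmul (e k) (∑ i, c i k • y i) := by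
    simpa using key 1
  rw [h1, h2]
  apply le_of_sq_le_sq' (norm_nonneg _) (by positivity)
  rw [mul_pow, norm_sum_tmul_on_left tmul htmul hee, norm_sum_tmul_on_left tmul htmul hee,
    Finset.mul_sum]
  refine Finset.sum_le_sum fun k _ => ?_
  have := R.le_opNorm (∑ i, c i k • y i)
  nlinarith [norm_nonneg (R (∑ i, c i k • y i)), norm_nonneg (∑ i, c i k • y i), norm_nonneg R]

/-- Norm of a tensor product operator is at most the product of norms. -/
lemma IsTensorOp.norm_le (htmul : IsHilbertTensorMap tmul) {S : H →L[ℂ] H} {R : K →L[ℂ] K}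
    {T : E →L[ℂ] E} (hT : IsTensorOp tmul S R T) : ‖T‖ ≤ ‖S‖ * ‖R‖ := by
  refine T.opNorm_le_bound (by positivity) fun z => ?_
  have hset : IsClosed {w : E | ‖T w‖ ≤ ‖S‖ * ‖R‖ * ‖w‖} :=
    isClosed_le (continuous_norm.comp T.continuous) (by fun_prop)
  have hsub : ((Submodule.span ℂ (Set.range fun p : H × K => tmul p.1 p.2) : Submodule ℂ E) : Set E)
      ⊆ {w : E | ‖T w‖ ≤ ‖S‖ * ‖R‖ * ‖w‖} := by
    intro w hw
    obtain ⟨n, f, g, hsum⟩ := Submodule.mem_span_set'.mp hw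
    have hg : ∀ i, ∃ p : H × K, tmul p.1 p.2 = (g i : E) := fun i => (g i).2
    choose p hp using hg
    have hw' : w = ∑ i, tmul (f i • (p i).1) ((p i).2) := by
      rw [← hsum]
      refine Finset.sum_congr rfl fun i _ => ?_
      rw [← hp i, map_smul, LinearMap.smul_apply]
    have hTw : T w = ∑ i, tmul (S (f i • (p i).1)) (R ((p i).2)) := by
      rw [hw', map_sum]
      exact Finset.sum_congr rfl fun i _ => hT _ _
    rw [Set.mem_setOf_eq, hTw, hw']
    calc ‖∑ i, tmul (S (f i • (p i).1)) (R ((p i).2))‖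
        ≤ ‖S‖ * ‖∑ i, tmul (f i • (p i).1) (R ((p i).2))‖ :=
          norm_sum_tmul_map_left tmul htmul S _ _
      _ ≤ ‖S‖ * (‖R‖ * ‖∑ i, tmul (f i • (p i).1) ((p i).2)‖) :=
          mul_le_mul_of_nonneg_left (norm_sum_tmul_map_right tmul htmul R _ _) (norm_nonneg S)
      _ = ‖S‖ * ‖R‖ * ‖∑ i, tmul (f i • (p i).1) ((p i).2)‖ := by ring
  have hz : z ∈ closure ((Submodule.span ℂ
      (Set.range fun p : H × K => tmul p.1 p.2) : Submodule ℂ E) : Set E) := by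
    rw [htmul.dense_span.closure_eq]; trivial
  exact hset.closure_subset_iff.mpr hsub hz

open scoped ComplexOrder in
/-- A tensor product of squares of self-adjoint operators is positive. -/
lemma IsTensorOp.isPositive (htmul : IsHilbertTensorMap tmul) {P : H →L[ℂ] H} {Q : K →L[ℂ] K}
    (hP : IsSelfAdjoint P) (hQ : IsSelfAdjoint Q) {T : E →L[ℂ] E}
    (hT : IsTensorOp tmul (P ^ 2) (Q ^ 2) T) : T.IsPositive := by
  have hPi : ∀ u v : H, ⟪P u, v⟫ = ⟪u, P v⟫ := fun u v => by
    conv_lhs => rw [← hP.adjoint_eq]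
    exact ContinuousLinearMap.adjoint_inner_left P v u
  have hQi : ∀ u v : K, ⟪Q u, v⟫ = ⟪u, Q v⟫ := fun u v => by
    conv_lhs => rw [← hQ.adjoint_eq]
    exact ContinuousLinearMap.adjoint_inner_left Q v u
  have hpos : ∀ z : E, 0 ≤ ⟪T z, z⟫ := by
    intro z
    have hset : IsClosed {w : E | 0 ≤ ⟪T w, w⟫} := by
      have heq : {w : E | 0 ≤ ⟪T w, w⟫} =
          {w : E | 0 ≤ (⟪T w, w⟫).re} ∩ {w : E | (0:ℝ) = (⟪T w, w⟫).im} := by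
        ext w
        simp only [Set.mem_setOf_eq, Set.mem_inter_iff, Complex.le_def, Complex.zero_re,
          Complex.zero_im]
      rw [heq]
      have hcont : Continuous fun w : E => ⟪T w, w⟫ :=
        Continuous.inner (T.continuous) continuous_id
      exact (isClosed_le continuous_const (Complex.continuous_re.comp hcont)).inter
        (isClosed_eq continuous_const (Complex.continuous_im.comp hcont))
    have hsub : ((Submodule.span ℂ (Set.range fun p : H × K => tmul p.1 p.2) : Submodule ℂ E) :
        Set E) ⊆ {w : E | 0 ≤ ⟪T w, w⟫} := by
      intro w hw
      obtain ⟨n, f, g, hsum⟩ := Submodule.mem_span_set'.mp hw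
      have hg : ∀ i, ∃ p : H × K, tmul p.1 p.2 = (g i : E) := fun i => (g i).2
      choose p hp using hg
      set xx : Fin n → H := fun i => f i • (p i).1 with hxx
      have hw' : w = ∑ i, tmul (xx i) ((p i).2) := by
        rw [← hsum]
        refine Finset.sum_congr rfl fun i _ => ?_
        rw [← hp i, map_smul, LinearMap.smul_apply]
      have hTw : T w = ∑ i, tmul ((P ^ 2) (xx i)) ((Q ^ 2) ((p i).2)) := by
        rw [hw', map_sum]
        exact Finset.sum_congr rfl fun i _ => hT _ _
      have hinner : ⟪T w, w⟫ =
          ⟪∑ i, tmul (P (xx i)) (Q ((p i).2)), ∑ i, tmul (P (xx i)) (Q ((p i).2))⟫ := by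
        rw [hTw]
        conv_lhs => rw [hw']
        rw [sum_inner, sum_inner]
        refine Finset.sum_congr rfl fun i _ => ?_
        rw [inner_sum, inner_sum]
        refine Finset.sum_congr rfl fun j _ => ?_
        rw [htmul.inner_tmul, htmul.inner_tmul]
        congr 1
        · show ⟪(P ^ 2) (xx i), xx j⟫ = ⟪P (xx i), P (xx j)⟫
          rw [pow_two]
          exact hPi (P (xx i)) (xx j)
        · show ⟪(Q ^ 2) ((p i).2), (p j).2⟫ = ⟪Q ((p i).2), Q ((p j).2)⟫
          rw [pow_two]
          exact hQi (Q ((p i).2)) ((p j).2)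
      rw [Set.mem_setOf_eq, hinner, inner_self_eq_norm_sq_to_K]
      positivity
    have hz : z ∈ closure ((Submodule.span ℂ
        (Set.range fun p : H × K => tmul p.1 p.2) : Submodule ℂ E) : Set E) := by
      rw [htmul.dense_span.closure_eq]; trivial
    exact hset.closure_subset_iff.mpr hsub hz
  rw [ContinuousLinearMap.isPositive_iff_complex]
  intro x
  obtain ⟨h1, h2⟩ := Complex.le_def.mp (hpos x)
  constructor
  · apply Complex.ext <;> simp [Complex.zero_im ▸ h2.symm]
  · simpa using h1

end TensorFacts

theorem stmt4
    {H K E : Type*} [NormedAddCommGroup H] [InnerProductSpace ℂ H] [CompleteSpace H]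
    [NormedAddCommGroup K] [InnerProductSpace ℂ K] [CompleteSpace K]
    [NormedAddCommGroup E] [InnerProductSpace ℂ E] [CompleteSpace E]
    (tmul : H →ₗ[ℂ] K →ₗ[ℂ] E) (htmul : IsHilbertTensorMap tmul)
    (A : H →L[ℂ] H) (B : K →L[ℂ] K)
    (U V W : E →L[ℂ] E)
    (hU : IsTensorOp tmul (absOp A ^ 2) (absOp B ^ 2) U)
    (hV : IsTensorOp tmul (absOp (ContinuousLinearMap.adjoint A) ^ 2)
      (absOp (ContinuousLinearMap.adjoint B) ^ 2) V)
    (hW : IsTensorOp tmul (absOp A * absOp (ContinuousLinearMap.adjoint A))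
      (absOp B * absOp (ContinuousLinearMap.adjoint B)) W) :
    (1 / 4) * ‖U + V‖ + (1 / 2) * ‖reOp W‖ ≤
      (1 / 4) * (‖A‖ * ‖B‖ + Real.sqrt ‖A ^ 2‖ * Real.sqrt ‖B ^ 2‖) ^ 2 ∧
    (1 / 4) * (‖A‖ * ‖B‖ + Real.sqrt ‖A ^ 2‖ * Real.sqrt ‖B ^ 2‖) ^ 2 ≤
      ‖A‖ ^ 2 * ‖B‖ ^ 2 := by
  set a : ℝ := ‖A‖ * ‖B‖ with ha
  set b : ℝ := Real.sqrt ‖A ^ 2‖ * Real.sqrt ‖B ^ 2‖ with hb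
  have ha0 : 0 ≤ a := mul_nonneg (norm_nonneg _) (norm_nonneg _)
  have hb0 : 0 ≤ b := mul_nonneg (Real.sqrt_nonneg _) (Real.sqrt_nonneg _)
  have hA2 : ‖A ^ 2‖ ≤ ‖A‖ ^ 2 := by rw [pow_two, pow_two]; exact norm_mul_le A A
  have hB2 : ‖B ^ 2‖ ≤ ‖B‖ ^ 2 := by rw [pow_two, pow_two]; exact norm_mul_le B B
  have hba : b ≤ a := by
    rw [ha, hb]
    have h1 : Real.sqrt ‖A ^ 2‖ ≤ ‖A‖ := by
      refine le_trans (Real.sqrt_le_sqrt hA2) ?_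
      rw [Real.sqrt_sq (norm_nonneg A)]
    have h2 : Real.sqrt ‖B ^ 2‖ ≤ ‖B‖ := by
      refine le_trans (Real.sqrt_le_sqrt hB2) ?_
      rw [Real.sqrt_sq (norm_nonneg B)]
    exact mul_le_mul h1 h2 (Real.sqrt_nonneg _) (norm_nonneg _)
  have hbsq : b ^ 2 = ‖A ^ 2‖ * ‖B ^ 2‖ := by
    rw [hb, mul_pow, Real.sq_sqrt (norm_nonneg _), Real.sq_sqrt (norm_nonneg _)]
  -- norm bounds from tensor structure
  have hUn : ‖U‖ ≤ a ^ 2 := by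
    refine le_trans (hU.norm_le tmul htmul) ?_
    rw [norm_absOp_sq, norm_absOp_sq]
    exact le_of_eq (by rw [ha]; ring)
  have hVn : ‖V‖ ≤ a ^ 2 := by
    refine le_trans (hV.norm_le tmul htmul) ?_
    rw [norm_absOp_adj_sq, norm_absOp_adj_sq]
    exact le_of_eq (by rw [ha]; ring)
  have hWn : ‖W‖ ≤ b ^ 2 := by
    refine le_trans (hW.norm_le tmul htmul) ?_
    rw [norm_absOp_mul_absOp_adj, norm_absOp_mul_absOp_adj, hbsq]
  -- U * V is a tensor operator
  have hUV : IsTensorOp tmul (absOp A ^ 2 * absOp (ContinuousLinearMap.adjoint A) ^ 2)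
      (absOp B ^ 2 * absOp (ContinuousLinearMap.adjoint B) ^ 2) (U * V) := by
    intro x y
    rw [ContinuousLinearMap.mul_apply, hV x y, hU _ _, ContinuousLinearMap.mul_apply,
      ContinuousLinearMap.mul_apply]
  have hUVn : ‖U * V‖ ≤ a ^ 2 * b ^ 2 := by
    refine le_trans (hUV.norm_le tmul htmul) ?_
    calc ‖absOp A ^ 2 * absOp (ContinuousLinearMap.adjoint A) ^ 2‖ *
          ‖absOp B ^ 2 * absOp (ContinuousLinearMap.adjoint B) ^ 2‖
        ≤ (‖A‖ ^ 2 * ‖A ^ 2‖) * (‖B‖ ^ 2 * ‖B ^ 2‖) := by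
          have h1 := norm_absOp_sq_mul_absOp_adj_sq A
          have h2 := norm_absOp_sq_mul_absOp_adj_sq B
          have h3 : (0:ℝ) ≤ ‖absOp A ^ 2 * absOp (ContinuousLinearMap.adjoint A) ^ 2‖ :=
            norm_nonneg _
          have h4 : (0:ℝ) ≤ ‖absOp B ^ 2 * absOp (ContinuousLinearMap.adjoint B) ^ 2‖ :=
            norm_nonneg _
          have h5 : (0:ℝ) ≤ ‖A‖ ^ 2 * ‖A ^ 2‖ := by positivity
          exact mul_le_mul h1 h2 h4 h5
      _ = a ^ 2 * b ^ 2 := by rw [ha, hbsq]; ring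
  -- positivity
  have hUpos : U.IsPositive := IsTensorOp.isPositive tmul htmul (absOp_sa A) (absOp_sa B) hU
  have hVpos : V.IsPositive := IsTensorOp.isPositive tmul htmul (absOp_sa _) (absOp_sa _) hV
  have hU0 : (0 : E →L[ℂ] E) ≤ U := (ContinuousLinearMap.nonneg_iff_isPositive U).mpr hUpos
  have hV0 : (0 : E →L[ℂ] E) ≤ V := (ContinuousLinearMap.nonneg_iff_isPositive V).mpr hVpos
  have hUsa : star U = U := hUpos.isSelfAdjoint
  have hVsa : star V = V := hVpos.isSelfAdjoint
  set c : ℝ := ‖U + V‖ with hc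
  have hc0 : (0:ℝ) ≤ c := norm_nonneg _
  -- key quadratic bound on c
  have hcsq : c * c ≤ a ^ 2 * c + 2 * (a ^ 2 * b ^ 2) := by
    have h1 : c * c = ‖(U + V) * (U + V)‖ := by
      rw [hc, ← CStarRing.norm_star_mul_self (x := U + V), star_add, hUsa, hVsa]
    have h2 : (U + V) * (U + V) = (U * U + V * V) + (U * V + V * U) := by noncomm_ring
    have h3 : ‖V * U‖ = ‖U * V‖ := by
      have : star (U * V) = V * U := by rw [star_mul, hUsa, hVsa]
      rw [← this, norm_star]
    have h4 : ‖U * U + V * V‖ ≤ a ^ 2 * c := by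
      have hm1 : U * U ≤ a ^ 2 • U := mul_self_le_smul hU0 hUn
      have hm2 : V * V ≤ a ^ 2 • V := mul_self_le_smul hV0 hVn
      have hle : U * U + V * V ≤ a ^ 2 • (U + V) := by
        rw [smul_add]
        exact add_le_add hm1 hm2
      have h0 : (0 : E →L[ℂ] E) ≤ U * U + V * V := by
        have hu : (0 : E →L[ℂ] E) ≤ U * U := by
          have := star_mul_self_nonneg U
          rwa [hUsa] at this
        have hv : (0 : E →L[ℂ] E) ≤ V * V := by
          have := star_mul_self_nonneg V
          rwa [hVsa] at this
        exact add_nonneg hu hv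
      refine le_trans (CStarAlgebra.norm_le_norm_of_nonneg_of_le h0 hle) ?_
      rw [norm_smul, Real.norm_of_nonneg (by positivity : (0:ℝ) ≤ a ^ 2)]
    calc c * c = ‖(U + V) * (U + V)‖ := h1
      _ = ‖(U * U + V * V) + (U * V + V * U)‖ := by rw [h2]
      _ ≤ ‖U * U + V * V‖ + (‖U * V‖ + ‖V * U‖) :=
          le_trans (norm_add_le _ _) (by gcongr; exact norm_add_le _ _)
      _ ≤ a ^ 2 * c + (a ^ 2 * b ^ 2 + a ^ 2 * b ^ 2) := by
          rw [h3]
          exact add_le_add h4 (add_le_add hUVn hUVn)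
      _ = a ^ 2 * c + 2 * (a ^ 2 * b ^ 2) := by ring
  have hre : ‖reOp W‖ ≤ b ^ 2 := le_trans (norm_reOp_le W) hWn
  constructor
  · have hq : c ≤ a^2 + 2*a*b - b^2 := by
      nlinarith [sq_nonneg (a - b), sq_nonneg (a + b), mul_nonneg ha0 hb0,
        mul_nonneg (mul_nonneg ha0 ha0) hb0, mul_nonneg (mul_nonneg hb0 hb0) hb0,
        mul_nonneg (mul_nonneg ha0 hb0) hb0, mul_nonneg (mul_nonneg ha0 ha0) ha0,
        mul_nonneg hc0 (mul_nonneg hb0 (sub_nonneg.mpr hba))]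
    nlinarith [hq, hre, norm_nonneg (reOp W)]
  · nlinarith [hba, ha0, hb0]
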